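/- Theorem 2.1(c). Fix t ∈ ℝ. Suppose x ∈ 𝓑_{ε1,ε2}, the separation condition σ(t) ≥ 2α/(φ'_k(t) − φ'_{k−1}(t)) holds for all t and k = 1,…,K, and 2M(t)(τ0 + λ_0(t)) ≤ μ(t). Let ε̃1 satisfy M(t)(τ0 + λ_0(t)) ≤ ε̃1 ≤ μ(t) − M(t)(τ0 + λ_0(t)); let η̂_0 = 0 and η̂_ℓ(t) = argmax_{η ∈ 𝓖_{t,ℓ}} |Ṽ_x(t,η)| for 1 ≤ ℓ ≤ K. Then for each ℓ = 0,1,…,K, |Ṽ_x(t, η̂_ℓ) − x_ℓ(t)| ≤ err_ℓ(t) + 2π I_1 A_ℓ(t) · |ĝ|^{−1}(1 − 2 err_ℓ(t)/A_ℓ(t)). -/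

import Mathlib

open MeasureTheory Real

noncomputable section

/-- The adaptive short-time Fourier transform with time-varying window width `σ`. -/
def aSTFT (x : ℝ → ℂ) (g : ℝ → ℝ) (σ : ℝ → ℝ) (t η : ℝ) : ℂ :=
  ∫ τ : ℝ, x (t + τ) * (((σ t)⁻¹ * g (τ / σ t) : ℝ) : ℂ) *
    Complex.exp (-(2 * (π : ℂ) * η * τ) * Complex.I)

/-- The Fourier transform `ĝ` of the window `g`. -/
def hatg (g : ℝ → ℝ) (ξ : ℝ) : ℂ :=
  ∫ τ : ℝ, (g τ : ℂ) * Complex.exp (-(2 * (π : ℂ) * ξ * τ) * Complex.I)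

/-- The absolute moments `I_n = ∫ |τ^n g(τ)| dτ` of the window. -/
def momentI (g : ℝ → ℝ) (n : ℕ) : ℝ := ∫ τ : ℝ, |τ| ^ n * |g τ|

/-- The `k`-th component `x_k(s) = A_k(s) e^{2πi φ_k(s)}`. -/
def xcomp (A φ : ℕ → ℝ → ℝ) (k : ℕ) (s : ℝ) : ℂ :=
  (A k s : ℂ) * Complex.exp ((2 * (π : ℂ) * φ k s) * Complex.I)

/-- `M(t) = Σ_{k=0}^K A_k(t)`. -/
def Msum (K : ℕ) (A : ℕ → ℝ → ℝ) (t : ℝ) : ℝ := ∑ k ∈ Finset.range (K + 1), A k t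

/-- `μ(t) = min_{0 ≤ k ≤ K} A_k(t)`. -/
def muMin (K : ℕ) (A : ℕ → ℝ → ℝ) (t : ℝ) : ℝ :=
  (Finset.range (K + 1)).inf' (by simp) fun k => A k t

/-- `λ_0(t) = ε1 I_1 σ(t) + π ε2 I_2 σ(t)²`. -/
def lam0 (g : ℝ → ℝ) (σ : ℝ → ℝ) (ε1 ε2 t : ℝ) : ℝ :=
  ε1 * momentI g 1 * σ t + π * ε2 * momentI g 2 * σ t ^ 2

/-- `err_ℓ(t) = M(t)λ_0(t) + Σ_{k≠ℓ} A_k(t) |ĝ(α(2|ℓ−k|−1))|`. -/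
def errl (K : ℕ) (A : ℕ → ℝ → ℝ) (g : ℝ → ℝ) (σ : ℝ → ℝ) (α ε1 ε2 : ℝ)
    (l : ℕ) (t : ℝ) : ℝ :=
  Msum K A t * lam0 g σ ε1 ε2 t +
    ∑ k ∈ (Finset.range (K + 1)).erase l,
      A k t * ‖hatg g (α * (2 * |(l : ℝ) - (k : ℝ)| - 1))‖

/-- `𝓖_t = {η : |Ṽ_x(t,η)| > ε̃1}`. -/
def Gt (x : ℝ → ℂ) (g : ℝ → ℝ) (σ : ℝ → ℝ) (t eps : ℝ) : Set ℝ :=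
  {η | eps < ‖aSTFT x g σ t η‖}

/-- `𝓖_{t,k} = {η ∈ 𝓖_t : |η − φ'_k(t)| < α/σ(t)}`. -/
def Gtk (x : ℝ → ℂ) (g : ℝ → ℝ) (σ : ℝ → ℝ) (φ : ℕ → ℝ → ℝ) (α t eps : ℝ)
    (k : ℕ) : Set ℝ :=
  {η | η ∈ Gt x g σ t eps ∧ |η - deriv (φ k) t| < α / σ t}

section AuxLemmas
open intervalIntegral FourierTransform


lemma hasDerivAt_exp_mul_I (z : ℝ) : HasDerivAt (fun s : ℝ => Complex.exp (s * Complex.I))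
    (Complex.exp ((z : ℂ) * Complex.I) * Complex.I) z := by
  have h1 : HasDerivAt (fun s : ℝ => (s : ℂ) * Complex.I) Complex.I z := by
    simpa using (Complex.ofRealCLM.hasDerivAt (x := z)).mul_const Complex.I
  exact (Complex.hasDerivAt_exp ((z : ℂ) * Complex.I)).comp z h1

lemma norm_exp_mul_I_sub_one (θ : ℝ) : ‖Complex.exp (θ * Complex.I) - 1‖ ≤ |θ| := by
  have key : ∀ z ∈ (Set.univ : Set ℝ), HasDerivWithinAt (fun s : ℝ => Complex.exp (s * Complex.I))
      (Complex.exp ((z : ℂ) * Complex.I) * Complex.I) Set.univ z :=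
    fun z _ => (hasDerivAt_exp_mul_I z).hasDerivWithinAt
  have := Convex.norm_image_sub_le_of_norm_hasDerivWithin_le key
    (fun z _ => by rw [norm_mul, Complex.norm_exp_ofReal_mul_I, Complex.norm_I, one_mul])
    (convex_univ) (Set.mem_univ (0:ℝ)) (Set.mem_univ θ)
  simpa [Real.norm_eq_abs] using this

lemma norm_exp_mul_I_sub_exp_mul_I (a b : ℝ) :
    ‖Complex.exp (a * Complex.I) - Complex.exp (b * Complex.I)‖ ≤ |a - b| := by
  have h : Complex.exp ((a : ℂ) * Complex.I) - Complex.exp ((b : ℂ) * Complex.I)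
      = Complex.exp ((b : ℂ) * Complex.I) * (Complex.exp (((a - b : ℝ) : ℂ) * Complex.I) - 1) := by
    rw [mul_sub, ← Complex.exp_add, mul_one]
    push_cast
    ring_nf
  rw [h, norm_mul, Complex.norm_exp_ofReal_mul_I, one_mul]
  exact norm_exp_mul_I_sub_one _


lemma taylor_two_bound {φ : ℝ → ℝ} (hφ : ContDiff ℝ 2 φ) {ε : ℝ}
    (hφ'' : ∀ s, |deriv (deriv φ) s| ≤ ε) (t τ : ℝ) :
    |φ (t + τ) - φ t - deriv φ t * τ| ≤ ε * τ ^ 2 / 2 := by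
  have hd1 : Differentiable ℝ φ := hφ.differentiable (by norm_num)
  have hd2 : Differentiable ℝ (deriv φ) := by
    have h2 : ContDiff ℝ (1 + 1 : ℕ) φ := by exact_mod_cast hφ
    have : ContDiff ℝ (1 : ℕ) (deriv φ) := (contDiff_succ_iff_deriv.mp h2).2.2
    exact this.differentiable (by norm_num)
  have hc2 : Continuous (deriv φ) := hd2.continuous
  have lip : ∀ u v : ℝ, |deriv φ u - deriv φ v| ≤ ε * |u - v| := by
    intro u v
    have key : ∀ z ∈ (Set.univ : Set ℝ), HasDerivWithinAt (deriv φ)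
        (deriv (deriv φ) z) Set.univ z :=
      fun z _ => ((hd2 z).hasDerivAt).hasDerivWithinAt
    have := Convex.norm_image_sub_le_of_norm_hasDerivWithin_le key
      (fun z _ => hφ'' z) (convex_univ) (Set.mem_univ v) (Set.mem_univ u)
    simpa [Real.norm_eq_abs] using this
  have hεnn : 0 ≤ ε := le_trans (abs_nonneg _) (hφ'' 0)
  have ftc : φ (t + τ) - φ t = ∫ s in t..(t + τ), deriv φ s :=
    (integral_deriv_eq_sub (fun s _ => hd1 s) (hc2.intervalIntegrable _ _)).symm
  have hconst : deriv φ t * τ = ∫ s in t..(t + τ), deriv φ t := by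
    simp [intervalIntegral.integral_const]; ring
  have hsub : φ (t + τ) - φ t - deriv φ t * τ
      = ∫ s in t..(t + τ), (deriv φ s - deriv φ t) := by
    rw [ftc, hconst, intervalIntegral.integral_sub (hc2.intervalIntegrable _ _)
      (intervalIntegrable_const)]
  rw [hsub]
  have hlin : ∀ a b : ℝ, (∫ s in a..b, ε * (s - a)) = ε * (b - a) ^ 2 / 2 := by
    intro a b
    have hF : ∀ s : ℝ, HasDerivAt (fun u : ℝ => ε / 2 * (u - a) ^ 2) (ε * (s - a)) s := by
      intro s
      have h := (((hasDerivAt_id s).sub_const a).pow 2).const_mul (ε / 2)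
      refine h.congr_deriv ?_
      simp
      ring
    rw [intervalIntegral.integral_eq_sub_of_hasDerivAt (fun s _ => hF s)
      ((continuous_const.mul (continuous_id.sub continuous_const)).intervalIntegrable _ _)]
    ring
  have hlin' : ∀ a b : ℝ, (∫ s in a..b, ε * (b - s)) = ε * (b - a) ^ 2 / 2 := by
    intro a b
    have hF : ∀ s : ℝ, HasDerivAt (fun u : ℝ => -(ε / 2) * (b - u) ^ 2) (ε * (b - s)) s := by
      intro s
      have h := (((hasDerivAt_id s).const_sub b).pow 2).const_mul (-(ε / 2))
      refine h.congr_deriv ?_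
      simp
      ring
    rw [intervalIntegral.integral_eq_sub_of_hasDerivAt (fun s _ => hF s)
      ((continuous_const.mul (continuous_const.sub continuous_id)).intervalIntegrable _ _)]
    ring
  rcases le_total 0 τ with hτ | hτ
  · calc |∫ s in t..(t + τ), (deriv φ s - deriv φ t)|
        ≤ ∫ s in t..(t + τ), ε * (s - t) := by
          apply (intervalIntegral.abs_integral_le_integral_abs (by linarith)).trans
          apply intervalIntegral.integral_mono_on (by linarith)
          · exact ((hc2.sub continuous_const).abs).intervalIntegrable _ _
          · exact ((continuous_const.mul (continuous_id.sub continuous_const))).intervalIntegrable _ _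
          · intro s hs
            calc |deriv φ s - deriv φ t| ≤ ε * |s - t| := lip s t
              _ = ε * (s - t) := by rw [abs_of_nonneg (by linarith [hs.1])]
      _ = ε * τ ^ 2 / 2 := by rw [hlin]; ring_nf
  · rw [intervalIntegral.integral_symm, abs_neg]
    calc |∫ s in (t + τ)..t, (deriv φ s - deriv φ t)|
        ≤ ∫ s in (t + τ)..t, ε * (t - s) := by
          apply (intervalIntegral.abs_integral_le_integral_abs (by linarith)).trans
          apply intervalIntegral.integral_mono_on (by linarith)
          · exact ((hc2.sub continuous_const).abs).intervalIntegrable _ _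
          · exact ((continuous_const.mul (continuous_const.sub continuous_id))).intervalIntegrable _ _
          · intro s hs
            calc |deriv φ s - deriv φ t| ≤ ε * |s - t| := lip s t
              _ = ε * (t - s) := by rw [abs_of_nonpos (by linarith [hs.2])]; ring
      _ = ε * τ ^ 2 / 2 := by rw [hlin']; ring_nf

variable {g : ℝ → ℝ} {σ0 : ℝ}

lemma moment_scale (n : ℕ) (hσ0 : 0 < σ0) (h : Integrable fun u : ℝ => |u| ^ n * |g u|) :
    Integrable (fun τ : ℝ => |τ| ^ n * (σ0⁻¹ * |g (τ / σ0)|)) ∧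
      (∫ τ : ℝ, |τ| ^ n * (σ0⁻¹ * |g (τ / σ0)|)) = σ0 ^ n * momentI g n := by
  have hσ0' : σ0 ≠ 0 := hσ0.ne'
  have comp : Integrable (fun τ : ℝ => |τ / σ0| ^ n * |g (τ / σ0)|) := h.comp_div hσ0'
  have hfun : (fun τ : ℝ => |τ| ^ n * (σ0⁻¹ * |g (τ / σ0)|))
      = fun τ : ℝ => (σ0 ^ n * σ0⁻¹) * (|τ / σ0| ^ n * |g (τ / σ0)|) := by
    funext τ
    rw [abs_div, abs_of_pos hσ0, div_pow]
    field_simp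
  constructor
  · rw [hfun]; exact comp.const_mul _
  · rw [hfun, MeasureTheory.integral_const_mul,
      Measure.integral_comp_div (fun u : ℝ => |u| ^ n * |g u|) σ0]
    rw [smul_eq_mul, abs_of_pos hσ0, momentI]
    field_simp

lemma hatg_scale (hσ0 : 0 < σ0) (hgint : Integrable g) (ξ : ℝ) :
    (∫ τ : ℝ, (((σ0⁻¹ * g (τ / σ0) : ℝ)) : ℂ) * Complex.exp (-(2 * (π : ℂ) * ξ * τ) * Complex.I))
      = hatg g (σ0 * ξ) := by
  have hσ0' : (σ0 : ℂ) ≠ 0 := Complex.ofReal_ne_zero.mpr hσ0.ne'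
  have hfun : (fun τ : ℝ => (((σ0⁻¹ * g (τ / σ0) : ℝ)) : ℂ) *
        Complex.exp (-(2 * (π : ℂ) * ξ * τ) * Complex.I))
      = fun τ : ℝ => (σ0⁻¹ : ℂ) •
        ((fun u : ℝ => (g u : ℂ) * Complex.exp (-(2 * (π : ℂ) * (σ0 * ξ) * u) * Complex.I)) (τ / σ0)) := by
    funext τ
    simp only [smul_eq_mul]
    push_cast
    rw [mul_assoc]
    congr 2
    congr 1
    field_simp
  rw [hfun, MeasureTheory.integral_smul,
    Measure.integral_comp_div
      (fun u : ℝ => (g u : ℂ) * Complex.exp (-(2 * (π : ℂ) * (σ0 * ξ) * u) * Complex.I)) σ0]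
  rw [abs_of_pos hσ0, smul_eq_mul, Complex.real_smul, inv_mul_cancel_left₀ hσ0']
  simp only [hatg, Complex.ofReal_mul, mul_assoc]

lemma hatg_zero (hgint : Integrable g) : hatg g 0 = ((∫ τ : ℝ, g τ : ℝ) : ℂ) := by
  simp only [hatg, Complex.ofReal_zero, mul_zero, zero_mul, neg_zero, Complex.exp_zero, mul_one]
  exact integral_ofReal

lemma momentI_nonneg (n : ℕ) : 0 ≤ momentI g n :=
  integral_nonneg fun τ => by positivity

lemma comp_est (hgint : Integrable g)
    (hI1 : Integrable fun u : ℝ => |u| ^ 1 * |g u|)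
    (hI2 : Integrable fun u : ℝ => |u| ^ 2 * |g u|)
    (Ak φk : ℝ → ℝ) (hAc : Continuous Ak) (hφc : Continuous φk)
    {σ0 : ℝ} (t η ε1 ε2 CA : ℝ) (hσ0 : 0 < σ0)
    (hCA : ∀ s, |Ak s| ≤ CA)
    (hlip : ∀ τ, |Ak (t + τ) - Ak t| ≤ ε1 * |τ| * Ak t)
    (htay : ∀ τ, |φk (t + τ) - φk t - deriv φk t * τ| ≤ ε2 * τ ^ 2 / 2)
    (hAt : 0 ≤ Ak t) :
    Integrable (fun τ : ℝ => (Ak (t + τ) : ℂ) *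
        Complex.exp ((2 * (π : ℂ) * (φk (t + τ))) * Complex.I) *
        (((σ0⁻¹ * g (τ / σ0) : ℝ)) : ℂ) * Complex.exp (-(2 * (π : ℂ) * η * τ) * Complex.I)) ∧
      ‖(∫ τ : ℝ, (Ak (t + τ) : ℂ) *
          Complex.exp ((2 * (π : ℂ) * (φk (t + τ))) * Complex.I) *
          (((σ0⁻¹ * g (τ / σ0) : ℝ)) : ℂ) * Complex.exp (-(2 * (π : ℂ) * η * τ) * Complex.I))
        - (Ak t : ℂ) * Complex.exp ((2 * (π : ℂ) * (φk t)) * Complex.I) *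
            hatg g (σ0 * (η - deriv φk t))‖
      ≤ Ak t * (ε1 * momentI g 1 * σ0 + π * ε2 * momentI g 2 * σ0 ^ 2) := by
  have hWre : Integrable (fun τ : ℝ => σ0⁻¹ * g (τ / σ0)) :=
    (hgint.comp_div hσ0.ne').const_mul _
  have hWc : Integrable (fun τ : ℝ => (((σ0⁻¹ * g (τ / σ0) : ℝ)) : ℂ)) := hWre.ofReal
  have hWnorm : ∀ τ : ℝ, ‖(((σ0⁻¹ * g (τ / σ0) : ℝ)) : ℂ)‖ = σ0⁻¹ * |g (τ / σ0)| := by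
    intro τ
    rw [Complex.norm_real, Real.norm_eq_abs, abs_mul, abs_of_pos (inv_pos.2 hσ0)]
  set φ' : ℝ := deriv φk t with hφ'
  set f : ℝ → ℂ := fun τ => (Ak (t + τ) : ℂ) *
      Complex.exp ((2 * (π : ℂ) * (φk (t + τ))) * Complex.I) *
      (((σ0⁻¹ * g (τ / σ0) : ℝ)) : ℂ) * Complex.exp (-(2 * (π : ℂ) * η * τ) * Complex.I) with hf
  set h : ℝ → ℂ := fun τ => (Ak t : ℂ) *
      Complex.exp ((2 * (π : ℂ) * (φk t + φ' * τ)) * Complex.I) *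
      (((σ0⁻¹ * g (τ / σ0) : ℝ)) : ℂ) * Complex.exp (-(2 * (π : ℂ) * η * τ) * Complex.I) with hh
  have unitexp : ∀ c : ℂ, (∃ r : ℝ, c = (r : ℂ) * Complex.I) → ‖Complex.exp c‖ = 1 := by
    rintro c ⟨r, rfl⟩
    exact Complex.norm_exp_ofReal_mul_I r
  have u1 : ∀ s : ℝ, ‖Complex.exp ((2 * (π : ℂ) * (φk s)) * Complex.I)‖ = 1 :=
    fun s => unitexp _ ⟨2 * π * φk s, by push_cast; ring⟩
  have u2 : ∀ τ : ℝ, ‖Complex.exp (-(2 * (π : ℂ) * η * τ) * Complex.I)‖ = 1 :=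
    fun τ => unitexp _ ⟨-(2 * π * η * τ), by push_cast; ring⟩
  have u3 : ∀ τ : ℝ, ‖Complex.exp ((2 * (π : ℂ) * (φk t + φ' * τ)) * Complex.I)‖ = 1 :=
    fun τ => unitexp _ ⟨2 * π * (φk t + φ' * τ), by push_cast; ring⟩
  -- integrability of f
  have hfint : Integrable f := by
    have hb : Continuous (fun τ : ℝ => (Ak (t + τ) : ℂ) *
        Complex.exp ((2 * (π : ℂ) * (φk (t + τ))) * Complex.I) *
        Complex.exp (-(2 * (π : ℂ) * η * τ) * Complex.I)) := by
      have c1 : Continuous fun τ : ℝ => (2 * (π : ℂ) * (φk (t + τ))) * Complex.I :=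
        (continuous_const.mul (Complex.continuous_ofReal.comp
          (hφc.comp (continuous_const.add continuous_id)))).mul continuous_const
      have c2 : Continuous fun τ : ℝ => -(2 * (π : ℂ) * η * τ) * Complex.I :=
        (((continuous_const.mul (Complex.continuous_ofReal)).neg)).mul continuous_const
      exact ((Complex.continuous_ofReal.comp (hAc.comp (continuous_const.add continuous_id))).mul
        (Complex.continuous_exp.comp c1)).mul (Complex.continuous_exp.comp c2)
    have key := Integrable.bdd_mul (c := CA) hWc hb.aestronglyMeasurable ?_
    · apply key.congr
      filter_upwards with τ
      simp only [Pi.mul_apply, hf]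
      ring
    · refine Filter.Eventually.of_forall fun τ => ?_
      rw [norm_mul, norm_mul, u1, u2, Complex.norm_real, Real.norm_eq_abs, mul_one, mul_one]
      exact hCA _
  -- integrability of h
  have hhint : Integrable h := by
    have hb : Continuous (fun τ : ℝ => (Ak t : ℂ) *
        Complex.exp ((2 * (π : ℂ) * (φk t + φ' * τ)) * Complex.I) *
        Complex.exp (-(2 * (π : ℂ) * η * τ) * Complex.I)) := by
      have c1 : Continuous fun τ : ℝ => (2 * (π : ℂ) * (φk t + φ' * τ)) * Complex.I :=
        (continuous_const.mul (continuous_const.add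
          (continuous_const.mul Complex.continuous_ofReal))).mul continuous_const
      have c2 : Continuous fun τ : ℝ => -(2 * (π : ℂ) * η * τ) * Complex.I :=
        (((continuous_const.mul (Complex.continuous_ofReal)).neg)).mul continuous_const
      exact (continuous_const.mul (Complex.continuous_exp.comp c1)).mul
        (Complex.continuous_exp.comp c2)
    have key := Integrable.bdd_mul (c := |Ak t|) hWc hb.aestronglyMeasurable ?_
    · apply key.congr
      filter_upwards with τ
      simp only [Pi.mul_apply, hh]
      ring
    · refine Filter.Eventually.of_forall fun τ => ?_
      rw [norm_mul, norm_mul, u3, u2, Complex.norm_real, Real.norm_eq_abs, mul_one, mul_one]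
  -- value of ∫ h
  have hhval : (∫ τ : ℝ, h τ)
      = (Ak t : ℂ) * Complex.exp ((2 * (π : ℂ) * (φk t)) * Complex.I) *
        hatg g (σ0 * (η - φ')) := by
    have hrw : ∀ τ : ℝ, h τ
        = ((Ak t : ℂ) * Complex.exp ((2 * (π : ℂ) * (φk t)) * Complex.I)) *
          ((((σ0⁻¹ * g (τ / σ0) : ℝ)) : ℂ) *
            Complex.exp (-(2 * (π : ℂ) * ((η - φ' : ℝ) : ℂ) * τ) * Complex.I)) := by
      intro τ
      simp only [hh]
      have e1 : Complex.exp ((2 * (π : ℂ) * (φk t + φ' * τ)) * Complex.I) *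
          Complex.exp (-(2 * (π : ℂ) * η * τ) * Complex.I)
          = Complex.exp ((2 * (π : ℂ) * (φk t)) * Complex.I) *
            Complex.exp (-(2 * (π : ℂ) * ((η - φ' : ℝ) : ℂ) * τ) * Complex.I) := by
        rw [← Complex.exp_add, ← Complex.exp_add]
        congr 1
        push_cast
        ring
      calc (Ak t : ℂ) * Complex.exp ((2 * (π : ℂ) * (φk t + φ' * τ)) * Complex.I) *
            (((σ0⁻¹ * g (τ / σ0) : ℝ)) : ℂ) * Complex.exp (-(2 * (π : ℂ) * η * τ) * Complex.I)
          = (Ak t : ℂ) * (Complex.exp ((2 * (π : ℂ) * (φk t + φ' * τ)) * Complex.I) *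
              Complex.exp (-(2 * (π : ℂ) * η * τ) * Complex.I)) *
            (((σ0⁻¹ * g (τ / σ0) : ℝ)) : ℂ) := by ring
        _ = _ := by rw [e1]; ring
    rw [funext hrw, MeasureTheory.integral_const_mul, hatg_scale hσ0 hgint (η - φ')]
  -- pointwise bound
  set m : ℝ → ℝ := fun τ => Ak t * ε1 * (|τ| ^ 1 * (σ0⁻¹ * |g (τ / σ0)|))
      + Ak t * (π * ε2) * (|τ| ^ 2 * (σ0⁻¹ * |g (τ / σ0)|)) with hm
  have pw : ∀ τ : ℝ, ‖f τ - h τ‖ ≤ m τ := by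
    intro τ
    have hgrp : f τ - h τ
        = ((Ak (t + τ) : ℂ) * Complex.exp ((2 * (π : ℂ) * (φk (t + τ))) * Complex.I)
            - (Ak t : ℂ) * Complex.exp ((2 * (π : ℂ) * (φk t + φ' * τ)) * Complex.I)) *
          (((σ0⁻¹ * g (τ / σ0) : ℝ)) : ℂ) *
          Complex.exp (-(2 * (π : ℂ) * η * τ) * Complex.I) := by
      simp only [hf, hh]
      ring
    have hdiff : ‖(Ak (t + τ) : ℂ) * Complex.exp ((2 * (π : ℂ) * (φk (t + τ))) * Complex.I)
        - (Ak t : ℂ) * Complex.exp ((2 * (π : ℂ) * (φk t + φ' * τ)) * Complex.I)‖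
        ≤ ε1 * |τ| * Ak t + Ak t * (π * ε2 * τ ^ 2) := by
      have split : (Ak (t + τ) : ℂ) * Complex.exp ((2 * (π : ℂ) * (φk (t + τ))) * Complex.I)
          - (Ak t : ℂ) * Complex.exp ((2 * (π : ℂ) * (φk t + φ' * τ)) * Complex.I)
          = ((Ak (t + τ) : ℝ) - (Ak t : ℝ) : ℝ) *
              Complex.exp ((2 * (π : ℂ) * (φk (t + τ))) * Complex.I)
            + (Ak t : ℂ) * (Complex.exp ((2 * (π : ℂ) * (φk (t + τ))) * Complex.I)
              - Complex.exp ((2 * (π : ℂ) * (φk t + φ' * τ)) * Complex.I)) := by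
        push_cast
        ring
      rw [split]
      refine (norm_add_le _ _).trans ?_
      rw [norm_mul, norm_mul, u1, mul_one, Complex.norm_real, Real.norm_eq_abs,
        Complex.norm_real, Real.norm_eq_abs]
      have b1 : |Ak (t + τ) - Ak t| ≤ ε1 * |τ| * Ak t := hlip τ
      have b2 : ‖Complex.exp ((2 * (π : ℂ) * (φk (t + τ))) * Complex.I)
          - Complex.exp ((2 * (π : ℂ) * (φk t + φ' * τ)) * Complex.I)‖
          ≤ π * ε2 * τ ^ 2 := by
        have e1 : (2 * (π : ℂ) * (φk (t + τ))) * Complex.I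
            = ((2 * π * φk (t + τ) : ℝ) : ℂ) * Complex.I := by push_cast; ring
        have e2 : (2 * (π : ℂ) * (φk t + φ' * τ)) * Complex.I
            = ((2 * π * (φk t + φ' * τ) : ℝ) : ℂ) * Complex.I := by push_cast; ring
        rw [e1, e2]
        refine (norm_exp_mul_I_sub_exp_mul_I _ _).trans ?_
        have : 2 * π * φk (t + τ) - 2 * π * (φk t + φ' * τ)
            = 2 * π * (φk (t + τ) - φk t - φ' * τ) := by ring
        rw [this, abs_mul, abs_of_nonneg (by positivity : (0:ℝ) ≤ 2 * π)]
        calc 2 * π * |φk (t + τ) - φk t - φ' * τ| ≤ 2 * π * (ε2 * τ ^ 2 / 2) := by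
              have h := htay τ
              gcongr
          _ = π * ε2 * τ ^ 2 := by ring
      rw [abs_of_nonneg hAt]
      exact add_le_add b1 (mul_le_mul_of_nonneg_left b2 hAt)
    rw [hgrp, norm_mul, norm_mul, u2, mul_one, hWnorm]
    calc (‖_ - _‖) * (σ0⁻¹ * |g (τ / σ0)|)
        ≤ (ε1 * |τ| * Ak t + Ak t * (π * ε2 * τ ^ 2)) * (σ0⁻¹ * |g (τ / σ0)|) := by
          apply mul_le_mul_of_nonneg_right hdiff
          positivity
      _ = m τ := by
          simp only [hm]
          rw [show τ ^ 2 = |τ| ^ 2 from (sq_abs τ).symm]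
          ring
  -- integrability of m and its integral
  obtain ⟨hm1int, hm1val⟩ := moment_scale 1 hσ0 hI1
  obtain ⟨hm2int, hm2val⟩ := moment_scale 2 hσ0 hI2
  have hmint : Integrable m := ((hm1int.const_mul _).add (hm2int.const_mul _))
  have hmval : (∫ τ : ℝ, m τ)
      = Ak t * (ε1 * momentI g 1 * σ0 + π * ε2 * momentI g 2 * σ0 ^ 2) := by
    simp only [hm]
    rw [integral_add ((hm1int.const_mul _)) ((hm2int.const_mul _)),
      MeasureTheory.integral_const_mul, MeasureTheory.integral_const_mul, hm1val, hm2val]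
    ring
  refine ⟨hfint, ?_⟩
  have : (∫ τ : ℝ, f τ) - (Ak t : ℂ) * Complex.exp ((2 * (π : ℂ) * (φk t)) * Complex.I) *
      hatg g (σ0 * (η - φ')) = ∫ τ : ℝ, (f τ - h τ) := by
    rw [integral_sub hfint hhint, hhval]
  rw [this]
  calc ‖∫ τ : ℝ, (f τ - h τ)‖ ≤ ∫ τ : ℝ, ‖f τ - h τ‖ := norm_integral_le_integral_norm _
    _ ≤ ∫ τ : ℝ, m τ := integral_mono (hfint.sub hhint).norm hmint pw
    _ = _ := hmval

lemma hatg_eq_fourier : hatg g = 𝓕 (fun τ : ℝ => (g τ : ℂ)) := by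
  funext ξ
  rw [Real.fourier_eq' (fun τ : ℝ => (g τ : ℂ)) ξ, hatg]
  congr 1
  funext τ
  rw [smul_eq_mul, mul_comm]
  congr 2
  simp only [RCLike.inner_apply, starRingEnd_apply, star_trivial]
  push_cast
  ring

lemma exists_hatg_eq (hgint : Integrable g) (hgnorm : (∫ τ : ℝ, g τ) = 1) {v : ℝ}
    (hv0 : 0 < v) (hv1 : v ≤ 1) : ∃ ξ : ℝ, 0 ≤ ξ ∧ ‖hatg g ξ‖ = v := by
  have hcont : Continuous fun ξ : ℝ => ‖hatg g ξ‖ := by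
    rw [hatg_eq_fourier]
    refine Continuous.norm ?_
    exact VectorFourier.fourierIntegral_continuous Real.continuous_fourierChar
      (by exact continuous_inner) hgint.ofReal
  have h0 : ‖hatg g 0‖ = 1 := by
    have : hatg g 0 = ((∫ τ : ℝ, g τ : ℝ) : ℂ) := by
      simp only [hatg, Complex.ofReal_zero, mul_zero, zero_mul, neg_zero, Complex.exp_zero,
        mul_one]
      exact integral_ofReal
    rw [this, hgnorm]
    simp
  have hRL : Filter.Tendsto (fun ξ : ℝ => ‖hatg g ξ‖) Filter.atTop (nhds 0) := by
    rw [hatg_eq_fourier]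
    have h1 : Filter.Tendsto (𝓕 fun τ : ℝ => (g τ : ℂ)) Filter.atTop (nhds 0) :=
      (Real.zero_at_infty_fourier _).mono_left
        atTop_le_cocompact
    simpa using h1.norm
  obtain ⟨N, hN⟩ := (hRL.eventually (gt_mem_nhds hv0)).exists_forall_of_atTop
  set ξ0 : ℝ := max N 0 with hξ0
  have hvmem : v ∈ Set.Icc ‖hatg g ξ0‖ ‖hatg g 0‖ := by
    constructor
    · exact le_of_lt (hN ξ0 (le_max_left _ _))
    · rw [h0]; exact hv1
  obtain ⟨ξ, hξmem, hξval⟩ := intermediate_value_Icc' (le_max_right N 0) hcont.continuousOn hvmem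
  exact ⟨ξ, hξmem.1, hξval⟩

lemma hatg_sub_one (hgint : Integrable g)
    (hI1 : Integrable fun u : ℝ => |u| ^ 1 * |g u|)
    (hgnorm : (∫ τ : ℝ, g τ) = 1) (ξ : ℝ) :
    ‖hatg g ξ - 1‖ ≤ 2 * π * |ξ| * momentI g 1 := by
  have hgc : Integrable (fun τ : ℝ => (g τ : ℂ)) := hgint.ofReal
  have hphase : ∀ τ : ℝ, -(2 * (π : ℂ) * ξ * τ) * Complex.I
      = ((-(2 * π * ξ * τ) : ℝ) : ℂ) * Complex.I := by intro τ; push_cast; ring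
  have hint : Integrable (fun τ : ℝ => (g τ : ℂ) *
      Complex.exp (-(2 * (π : ℂ) * ξ * τ) * Complex.I)) := by
    have hb : Continuous fun τ : ℝ => Complex.exp (-(2 * (π : ℂ) * ξ * τ) * Complex.I) :=
      Complex.continuous_exp.comp
        (((continuous_const.mul Complex.continuous_ofReal).neg).mul continuous_const)
    have key := Integrable.bdd_mul (c := 1) hgc hb.aestronglyMeasurable (Filter.Eventually.of_forall fun τ => by
      rw [hphase τ, Complex.norm_exp_ofReal_mul_I])
    apply key.congr
    filter_upwards with τ
    exact mul_comm _ _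
  have hone : (1 : ℂ) = ∫ τ : ℝ, (g τ : ℂ) := by
    rw [show ((1:ℂ)) = ((∫ τ : ℝ, g τ : ℝ) : ℂ) by rw [hgnorm]; simp]
    exact integral_ofReal.symm
  have hsub : hatg g ξ - 1 = ∫ τ : ℝ, ((g τ : ℂ) *
      Complex.exp (-(2 * (π : ℂ) * ξ * τ) * Complex.I) - (g τ : ℂ)) := by
    rw [integral_sub hint hgc, hatg, ← hone]
  rw [hsub]
  have hmaj : Integrable (fun τ : ℝ => 2 * π * |ξ| * (|τ| ^ 1 * |g τ|)) := hI1.const_mul _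
  calc ‖∫ τ : ℝ, ((g τ : ℂ) * Complex.exp (-(2 * (π : ℂ) * ξ * τ) * Complex.I) - (g τ : ℂ))‖
      ≤ ∫ τ : ℝ, ‖(g τ : ℂ) * Complex.exp (-(2 * (π : ℂ) * ξ * τ) * Complex.I) - (g τ : ℂ)‖ :=
        norm_integral_le_integral_norm _
    _ ≤ ∫ τ : ℝ, 2 * π * |ξ| * (|τ| ^ 1 * |g τ|) := by
        refine integral_mono (hint.sub hgc).norm hmaj fun τ => ?_
        have : (g τ : ℂ) * Complex.exp (-(2 * (π : ℂ) * ξ * τ) * Complex.I) - (g τ : ℂ)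
            = (g τ : ℂ) * (Complex.exp (-(2 * (π : ℂ) * ξ * τ) * Complex.I) - 1) := by ring
        rw [this, norm_mul, Complex.norm_real, Real.norm_eq_abs]
        calc |g τ| * ‖Complex.exp (-(2 * (π : ℂ) * ξ * τ) * Complex.I) - 1‖
            ≤ |g τ| * |(-(2 * π * ξ * τ) : ℝ)| := by
              refine mul_le_mul_of_nonneg_left ?_ (abs_nonneg _)
              rw [hphase τ]
              exact norm_exp_mul_I_sub_one _
          _ ≤ 2 * π * |ξ| * (|τ| ^ 1 * |g τ|) := by
              rw [abs_neg, pow_one]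
              rw [show |2 * π * ξ * τ| = 2 * π * |ξ| * |τ| by
                rw [abs_mul, abs_mul, abs_of_nonneg (by positivity : (0:ℝ) ≤ 2*π)]]
              nlinarith [abs_nonneg (g τ), abs_nonneg τ, abs_nonneg ξ, Real.pi_pos]
    _ = 2 * π * |ξ| * momentI g 1 := by
        rw [MeasureTheory.integral_const_mul]; rfl

end AuxLemmas

set_option maxHeartbeats 1000000 in
theorem thm2_1c (K : ℕ) (A φ : ℕ → ℝ → ℝ) (ε1 ε2 : ℝ) (x : ℝ → ℂ)
    (g : ℝ → ℝ) (σ : ℝ → ℝ) (τ0 α t epst : ℝ)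
    (hε1 : 0 < ε1) (hε2 : 0 < ε2)
    (hAreg : ∀ k ≤ K, ContDiff ℝ 1 (A k))
    (hAbdd : ∀ k ≤ K, ∃ C, ∀ s, |A k s| ≤ C)
    (hφreg : ∀ k ≤ K, ContDiff ℝ 2 (φ k))
    (hφ0 : ∀ s, φ 0 s = 0)
    (hApos : ∀ k ≤ K, ∀ s, 0 < A k s)
    (hφ'pos : ∀ k, 1 ≤ k → k ≤ K → ∃ c > 0, ∀ s, c ≤ deriv (φ k) s)
    (hφ'bdd : ∀ k, 1 ≤ k → k ≤ K → ∃ C, ∀ s, deriv (φ k) s ≤ C)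
    (hfreq : ∃ d > 0, ∀ k, 2 ≤ k → k ≤ K → ∀ s, d ≤ deriv (φ k) s - deriv (φ (k - 1)) s)
    (hAlip : ∀ k ≤ K, ∀ s τ, |A k (s + τ) - A k s| ≤ ε1 * |τ| * A k s)
    (hφ'' : ∀ k, 1 ≤ k → k ≤ K → ∀ s, |deriv (deriv (φ k)) s| ≤ ε2)
    (hx : ∀ s, x s = ∑ k ∈ Finset.range (K + 1), xcomp A φ k s)
    (hgint : Integrable g)
    (hgL2 : MemLp g 2 (volume : Measure ℝ))
    (hgI1 : Integrable fun τ : ℝ => τ * g τ)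
    (hgI2 : Integrable fun τ : ℝ => τ ^ 2 * g τ)
    (hgnorm : (∫ τ : ℝ, g τ) = 1)
    (hgeven : ∀ ξ, ‖hatg g (-ξ)‖ = ‖hatg g ξ‖)
    (hgdec : ∀ ξ1 ξ2, 0 ≤ ξ1 → ξ1 ≤ ξ2 → ‖hatg g ξ2‖ ≤ ‖hatg g ξ1‖)
    (hτ0 : 0 < τ0) (hτ0' : τ0 < 1)
    (hα : 0 < α) (hgα : ‖hatg g α‖ = τ0)
    (hσ : ∀ s, 0 < σ s)
    (hsep : ∀ s, ∀ k, 1 ≤ k → k ≤ K →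
      2 * α / (deriv (φ k) s - deriv (φ (k - 1)) s) ≤ σ s)
    (hmain : 2 * Msum K A t * (τ0 + lam0 g σ ε1 ε2 t) ≤ muMin K A t)
    (heps1 : Msum K A t * (τ0 + lam0 g σ ε1 ε2 t) ≤ epst)
    (heps2 : epst ≤ muMin K A t - Msum K A t * (τ0 + lam0 g σ ε1 ε2 t))
    (ginv : ℝ → ℝ)
    (hginv : ∀ ξ, 0 ≤ ξ → ginv ‖hatg g ξ‖ = ξ)
    (ηhat : ℕ → ℝ)
    (hηmem : ∀ l, 1 ≤ l → l ≤ K → ηhat l ∈ Gtk x g σ φ α t epst l)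
    (hηmax : ∀ l, 1 ≤ l → l ≤ K → ∀ η ∈ Gtk x g σ φ α t epst l,
      ‖aSTFT x g σ t η‖ ≤ ‖aSTFT x g σ t (ηhat l)‖)
    (hη0 : ηhat 0 = 0)
    :
    ∀ l ≤ K,
      ‖aSTFT x g σ t (ηhat l) - xcomp A φ l t‖ ≤
        errl K A g σ α ε1 ε2 l t +
          2 * π * momentI g 1 * A l t *
            ginv (1 - 2 * errl K A g σ α ε1 ε2 l t / A l t) := by
  have hσt : 0 < σ t := hσ t
  have hI1' : Integrable fun u : ℝ => |u| ^ 1 * |g u| := by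
    simpa [abs_mul] using hgI1.abs
  have hI2' : Integrable fun u : ℝ => |u| ^ 2 * |g u| := by
    simpa [abs_mul, abs_pow] using hgI2.abs
  have hI1nn : 0 ≤ momentI g 1 := momentI_nonneg 1
  have hI2nn : 0 ≤ momentI g 2 := momentI_nonneg 2
  have hπ : (0:ℝ) < π := Real.pi_pos
  have hlam0 : 0 ≤ lam0 g σ ε1 ε2 t := by
    unfold lam0
    have h1 : 0 ≤ ε1 * momentI g 1 * σ t := by positivity
    have h2 : 0 ≤ π * ε2 * momentI g 2 * σ t ^ 2 := by positivity
    linarith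
  have hMpos : 0 < Msum K A t := by
    refine Finset.sum_pos (fun k hk => hApos k (Nat.lt_succ_iff.mp (Finset.mem_range.mp hk)) t)
      ⟨0, Finset.mem_range.mpr (Nat.succ_pos K)⟩
  have hμA : ∀ k, k ≤ K → muMin K A t ≤ A k t := fun k hk =>
    Finset.inf'_le _ (Finset.mem_range.mpr (Nat.lt_succ_of_le hk))
  have hφ0fun : φ 0 = fun _ : ℝ => (0:ℝ) := funext hφ0
  have dφ0 : deriv (φ 0) t = 0 := by rw [hφ0fun]; simp
  have hatg1 : hatg g 0 = 1 := by
    rw [hatg_zero hgint, hgnorm]; simp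
  have hxnorm : ∀ k, k ≤ K → ‖xcomp A φ k t‖ = A k t := by
    intro k hk
    rw [xcomp, norm_mul]
    have he : (2 * (π:ℂ) * (φ k t)) * Complex.I = ((2 * π * φ k t : ℝ) : ℂ) * Complex.I := by
      push_cast; ring
    rw [he, Complex.norm_exp_ofReal_mul_I, Complex.norm_real, Real.norm_eq_abs, mul_one,
      abs_of_pos (hApos k hk t)]
  have hdist : ∀ l k : ℕ, k ≠ l → (1:ℝ) ≤ |(l:ℝ) - (k:ℝ)| := by
    intro l k hkl
    have h1 : (l:ℤ) - (k:ℤ) ≠ 0 := sub_ne_zero.mpr (by exact_mod_cast (Ne.symm hkl))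
    have h2 : 1 ≤ |(l:ℤ) - (k:ℤ)| := Int.one_le_abs h1
    have h3 : ((1:ℤ):ℝ) ≤ ((|(l:ℤ) - (k:ℤ)| : ℤ) : ℝ) := by exact_mod_cast h2
    rw [Int.cast_abs] at h3
    push_cast at h3
    exact h3
  have hmono : ∀ u v : ℝ, 0 ≤ v → v ≤ |u| → ‖hatg g u‖ ≤ ‖hatg g v‖ := by
    intro u v hv hvu
    rcases le_total 0 u with hu | hu
    · rw [abs_of_nonneg hu] at hvu; exact hgdec v u hv hvu
    · rw [abs_of_nonpos hu] at hvu
      have he := hgeven (-u)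
      rw [neg_neg] at he
      rw [he]
      exact hgdec v (-u) hv hvu
  -- per-component estimate
  have hck : ∀ k, k ≤ K → ∀ η : ℝ,
      Integrable (fun τ : ℝ => xcomp A φ k (t + τ) * (((σ t)⁻¹ * g (τ / σ t) : ℝ) : ℂ) *
        Complex.exp (-(2 * (π : ℂ) * η * τ) * Complex.I)) ∧
      ‖(∫ τ : ℝ, xcomp A φ k (t + τ) * (((σ t)⁻¹ * g (τ / σ t) : ℝ) : ℂ) *
          Complex.exp (-(2 * (π : ℂ) * η * τ) * Complex.I))
        - xcomp A φ k t * hatg g (σ t * (η - deriv (φ k) t))‖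
      ≤ A k t * lam0 g σ ε1 ε2 t := by
    intro k hk η
    obtain ⟨C, hC⟩ := hAbdd k hk
    have htayk : ∀ τ, |φ k (t + τ) - φ k t - deriv (φ k) t * τ| ≤ ε2 * τ ^ 2 / 2 := by
      rcases Nat.eq_zero_or_pos k with rfl | h1
      · intro τ
        rw [hφ0 (t + τ), hφ0 t, dφ0]
        simp only [sub_zero, zero_mul, sub_self, abs_zero]
        positivity
      · exact fun τ => taylor_two_bound (hφreg k hk) (hφ'' k h1 hk) t τ
    have key := comp_est hgint hI1' hI2' (A k) (φ k) (hAreg k hk).continuous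
      (hφreg k hk).continuous t η ε1 ε2 C hσt hC (fun τ => hAlip k hk t τ) htayk
      (hApos k hk t).le
    simpa only [xcomp, lam0] using key
  -- global approximation
  have happrox : ∀ η : ℝ,
      ‖aSTFT x g σ t η - ∑ k ∈ Finset.range (K + 1),
          xcomp A φ k t * hatg g (σ t * (η - deriv (φ k) t))‖
      ≤ Msum K A t * lam0 g σ ε1 ε2 t := by
    intro η
    have hsplit : aSTFT x g σ t η = ∑ k ∈ Finset.range (K + 1),
        ∫ τ : ℝ, xcomp A φ k (t + τ) * (((σ t)⁻¹ * g (τ / σ t) : ℝ) : ℂ) *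
          Complex.exp (-(2 * (π : ℂ) * η * τ) * Complex.I) := by
      rw [aSTFT,
        show (fun τ : ℝ => x (t + τ) * (((σ t)⁻¹ * g (τ / σ t) : ℝ) : ℂ) *
            Complex.exp (-(2 * (π : ℂ) * η * τ) * Complex.I))
          = fun τ : ℝ => ∑ k ∈ Finset.range (K + 1),
              xcomp A φ k (t + τ) * (((σ t)⁻¹ * g (τ / σ t) : ℝ) : ℂ) *
                Complex.exp (-(2 * (π : ℂ) * η * τ) * Complex.I) from
          funext fun τ => by rw [hx (t + τ), Finset.sum_mul, Finset.sum_mul]]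
      exact integral_finset_sum _
        (fun k hk => (hck k (Nat.lt_succ_iff.mp (Finset.mem_range.mp hk)) η).1)
    rw [hsplit, ← Finset.sum_sub_distrib]
    refine (norm_sum_le _ _).trans ?_
    rw [Msum, Finset.sum_mul]
    exact Finset.sum_le_sum fun k hk =>
      (hck k (Nat.lt_succ_iff.mp (Finset.mem_range.mp hk)) η).2
  -- separation steps
  have hstep : ∀ i, 1 ≤ i → i ≤ K →
      2 * α / σ t ≤ deriv (φ i) t - deriv (φ (i - 1)) t := by
    intro i h1 hK
    have hgap : 0 < deriv (φ i) t - deriv (φ (i - 1)) t := by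
      rcases eq_or_lt_of_le h1 with he | h2
      · obtain ⟨c, hc, hcle⟩ := hφ'pos i h1 hK
        have : i - 1 = 0 := by omega
        rw [this, dφ0]
        have := hcle t
        linarith
      · obtain ⟨d, hd, hdle⟩ := hfreq
        have := hdle i h2 hK t
        linarith
    have hs := hsep t i h1 hK
    rw [div_le_iff₀ hgap] at hs
    rw [div_le_iff₀ hσt]
    linarith [mul_comm (σ t) (deriv (φ i) t - deriv (φ (i - 1)) t)]
  have gaps : ∀ j k : ℕ, j ≤ k → k ≤ K →
      ((k : ℝ) - (j : ℝ)) * (2 * α / σ t) ≤ deriv (φ k) t - deriv (φ j) t := by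
    intro j k hjk
    induction k, hjk using Nat.le_induction with
    | base => intro _; simp
    | succ n hn ih =>
      intro hnK
      have hih := ih (by omega)
      have hs := hstep (n + 1) (by omega) hnK
      have hsimp : (n + 1) - 1 = n := by omega
      rw [hsimp] at hs
      push_cast
      have : ((n:ℝ) + 1 - (j:ℝ)) * (2 * α / σ t)
          = ((n:ℝ) - (j:ℝ)) * (2 * α / σ t) + 2 * α / σ t := by ring
      rw [this]
      linarith
  -- the key Gtk estimate
  have hB : ∀ l, l ≤ K → ∀ η : ℝ, |η - deriv (φ l) t| < α / σ t →
      ‖aSTFT x g σ t η - xcomp A φ l t * hatg g (σ t * (η - deriv (φ l) t))‖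
        ≤ errl K A g σ α ε1 ε2 l t := by
    intro l hl η hη
    have hmem : l ∈ Finset.range (K + 1) := Finset.mem_range.mpr (Nat.lt_succ_of_le hl)
    have hsum := Finset.sum_erase_add (Finset.range (K + 1))
      (fun k => xcomp A φ k t * hatg g (σ t * (η - deriv (φ k) t))) hmem
    have hdecomp : aSTFT x g σ t η - xcomp A φ l t * hatg g (σ t * (η - deriv (φ l) t))
        = (aSTFT x g σ t η - ∑ k ∈ Finset.range (K + 1),
            xcomp A φ k t * hatg g (σ t * (η - deriv (φ k) t)))
          + ∑ k ∈ (Finset.range (K + 1)).erase l,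
              xcomp A φ k t * hatg g (σ t * (η - deriv (φ k) t)) := by
      rw [← hsum]; ring
    rw [hdecomp, errl]
    refine (norm_add_le _ _).trans (add_le_add (happrox η) ?_)
    refine (norm_sum_le _ _).trans (Finset.sum_le_sum fun k hk => ?_)
    have hkK : k ≤ K := Nat.lt_succ_iff.mp (Finset.mem_range.mp (Finset.mem_of_mem_erase hk))
    have hkl : k ≠ l := Finset.ne_of_mem_erase hk
    rw [norm_mul, hxnorm k hkK]
    refine mul_le_mul_of_nonneg_left ?_ (hApos k hkK t).le
    have h1 := hdist l k hkl
    refine hmono _ _ ?_ ?_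
    · nlinarith [hα.le]
    · -- α(2|l-k|-1) ≤ |σ(η-φ'_k)|
      have hsepkl : 2 * |(l:ℝ) - (k:ℝ)| * (α / σ t) ≤ |deriv (φ k) t - deriv (φ l) t| := by
        rcases lt_or_gt_of_ne hkl with hlt | hgt
        · have hg := gaps k l (le_of_lt hlt) hl
          have hc : ((k:ℝ)) < (l:ℝ) := by exact_mod_cast hlt
          have habs1 : |(l:ℝ) - (k:ℝ)| = (l:ℝ) - (k:ℝ) := abs_of_nonneg (by linarith)
          have habs2 : |deriv (φ k) t - deriv (φ l) t| = deriv (φ l) t - deriv (φ k) t := by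
            rw [abs_sub_comm]
            refine abs_of_nonneg ?_
            have h2 : 0 ≤ ((l:ℝ) - (k:ℝ)) * (2 * α / σ t) :=
              mul_nonneg (by linarith) (by positivity)
            linarith
          rw [habs1, habs2]
          calc 2 * ((l:ℝ) - (k:ℝ)) * (α / σ t) = ((l:ℝ) - (k:ℝ)) * (2 * α / σ t) := by ring
            _ ≤ _ := hg
        · have hg := gaps l k (le_of_lt hgt) hkK
          have hc : ((l:ℝ)) < (k:ℝ) := by exact_mod_cast hgt
          have habs1 : |(l:ℝ) - (k:ℝ)| = (k:ℝ) - (l:ℝ) := by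
            rw [abs_sub_comm]; exact abs_of_nonneg (by linarith)
          have habs2 : |deriv (φ k) t - deriv (φ l) t| = deriv (φ k) t - deriv (φ l) t := by
            refine abs_of_nonneg ?_
            have h2 : 0 ≤ ((k:ℝ) - (l:ℝ)) * (2 * α / σ t) :=
              mul_nonneg (by linarith) (by positivity)
            linarith
          rw [habs1, habs2]
          calc 2 * ((k:ℝ) - (l:ℝ)) * (α / σ t) = ((k:ℝ) - (l:ℝ)) * (2 * α / σ t) := by ring
            _ ≤ _ := hg
      have htri : |deriv (φ k) t - deriv (φ l) t| - |η - deriv (φ l) t|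
          ≤ |η - deriv (φ k) t| := by
        have h3 := abs_sub_abs_le_abs_sub (deriv (φ k) t - deriv (φ l) t) (deriv (φ k) t - η)
        have h4 : |deriv (φ k) t - deriv (φ l) t - (deriv (φ k) t - η)| = |η - deriv (φ l) t| := by
          rw [show deriv (φ k) t - deriv (φ l) t - (deriv (φ k) t - η)
            = η - deriv (φ l) t by ring]
        have h5 : |deriv (φ k) t - η| = |η - deriv (φ k) t| := abs_sub_comm _ _
        linarith
      rw [abs_mul, abs_of_pos hσt]
      have hrw : α * (2 * |(l:ℝ) - (k:ℝ)| - 1)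
          = σ t * (2 * |(l:ℝ) - (k:ℝ)| * (α / σ t) - α / σ t) := by
        field_simp
      rw [hrw]
      refine mul_le_mul_of_nonneg_left ?_ hσt.le
      linarith
  -- main part
  intro l hl
  have hmem : l ∈ Finset.range (K + 1) := Finset.mem_range.mpr (Nat.lt_succ_of_le hl)
  have hAlpos : 0 < A l t := hApos l hl t
  have hEnn : 0 ≤ errl K A g σ α ε1 ε2 l t := by
    rw [errl]
    have h1 : 0 ≤ ∑ k ∈ (Finset.range (K + 1)).erase l,
        A k t * ‖hatg g (α * (2 * |(l : ℝ) - (k : ℝ)| - 1))‖ :=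
      Finset.sum_nonneg fun k hk => mul_nonneg
        (hApos k (Nat.lt_succ_iff.mp (Finset.mem_range.mp (Finset.mem_of_mem_erase hk))) t).le
        (norm_nonneg _)
    have h2 : 0 ≤ Msum K A t * lam0 g σ ε1 ε2 t := mul_nonneg hMpos.le hlam0
    linarith
  have hsumA : ∑ k ∈ (Finset.range (K + 1)).erase l, A k t = Msum K A t - A l t := by
    have := Finset.sum_erase_add (Finset.range (K + 1)) (fun k => A k t) hmem
    rw [Msum]
    linarith [this]
  have hEbound : errl K A g σ α ε1 ε2 l t
      ≤ Msum K A t * lam0 g σ ε1 ε2 t + (Msum K A t - A l t) * τ0 := by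
    rw [errl]
    refine add_le_add_right ?_ _
    calc ∑ k ∈ (Finset.range (K + 1)).erase l,
          A k t * ‖hatg g (α * (2 * |(l : ℝ) - (k : ℝ)| - 1))‖
        ≤ ∑ k ∈ (Finset.range (K + 1)).erase l, A k t * τ0 := by
          refine Finset.sum_le_sum fun k hk => ?_
          have hkK : k ≤ K :=
            Nat.lt_succ_iff.mp (Finset.mem_range.mp (Finset.mem_of_mem_erase hk))
          have hkl : k ≠ l := Finset.ne_of_mem_erase hk
          refine mul_le_mul_of_nonneg_left ?_ (hApos k hkK t).le
          rw [← hgα]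
          refine hgdec α _ hα.le ?_
          have := hdist l k hkl
          nlinarith [hα.le]
      _ = (Msum K A t - A l t) * τ0 := by rw [← Finset.sum_mul, hsumA]
  have hElt : errl K A g σ α ε1 ε2 l t < Msum K A t * (τ0 + lam0 g σ ε1 ε2 t) := by
    nlinarith [hEbound, mul_pos hAlpos hτ0]
  have hE2 : 2 * errl K A g σ α ε1 ε2 l t < A l t := by
    nlinarith [hEbound, hmain, hμA l hl, mul_pos hAlpos hτ0]
  have hclose : |ηhat l - deriv (φ l) t| < α / σ t := by
    rcases Nat.eq_zero_or_pos l with rfl | hpos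
    · rw [hη0, dφ0]
      simpa using div_pos hα hσt
    · exact (hηmem l hpos hl).2
  have hBl := hB l hl (ηhat l) hclose
  -- lower bound at the ridge point
  have hBφ := hB l hl (deriv (φ l) t) (by simpa using div_pos hα hσt)
  rw [show σ t * (deriv (φ l) t - deriv (φ l) t) = 0 by ring, hatg1, mul_one] at hBφ
  have hlowφ : A l t - errl K A g σ α ε1 ε2 l t ≤ ‖aSTFT x g σ t (deriv (φ l) t)‖ := by
    have h1 := norm_sub_norm_le (aSTFT x g σ t (deriv (φ l) t)) (xcomp A φ l t)
    have h2 := hxnorm l hl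
    linarith [abs_le.mp (abs_norm_sub_norm_le (aSTFT x g σ t (deriv (φ l) t)) (xcomp A φ l t))]
  have hlower : A l t - errl K A g σ α ε1 ε2 l t ≤ ‖aSTFT x g σ t (ηhat l)‖ := by
    rcases Nat.eq_zero_or_pos l with rfl | hpos
    · rw [hη0]
      rw [dφ0] at hlowφ
      exact hlowφ
    · refine hlowφ.trans (hηmax l hpos hl _ ⟨?_, by simpa using div_pos hα hσt⟩)
      show epst < ‖aSTFT x g σ t (deriv (φ l) t)‖
      have hc1 : epst < A l t - errl K A g σ α ε1 ε2 l t := by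
        linarith [hμA l hl, hElt, heps2]
      linarith [hlowφ]
  -- upper bound and hatg value at the maximizer
  have hupper : ‖aSTFT x g σ t (ηhat l)‖
      ≤ A l t * ‖hatg g (σ t * (ηhat l - deriv (φ l) t))‖ + errl K A g σ α ε1 ε2 l t := by
    have h1 := norm_sub_norm_le (aSTFT x g σ t (ηhat l))
      (xcomp A φ l t * hatg g (σ t * (ηhat l - deriv (φ l) t)))
    rw [norm_mul, hxnorm l hl] at h1
    linarith [hBl]
  have hgval : 1 - 2 * errl K A g σ α ε1 ε2 l t / A l t
      ≤ ‖hatg g (σ t * (ηhat l - deriv (φ l) t))‖ := by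
    have h2 : (A l t - 2 * errl K A g σ α ε1 ε2 l t) / A l t
        ≤ ‖hatg g (σ t * (ηhat l - deriv (φ l) t))‖ := by
      rw [div_le_iff₀ hAlpos]
      linarith [hlower, hupper,
        mul_comm (A l t) ‖hatg g (σ t * (ηhat l - deriv (φ l) t))‖]
    calc 1 - 2 * errl K A g σ α ε1 ε2 l t / A l t
        = (A l t - 2 * errl K A g σ α ε1 ε2 l t) / A l t := by field_simp
      _ ≤ _ := h2
  have hv0 : 0 < 1 - 2 * errl K A g σ α ε1 ε2 l t / A l t := by
    have h3 : 2 * errl K A g σ α ε1 ε2 l t / A l t < 1 :=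
      (div_lt_one hAlpos).mpr (by linarith [hE2])
    linarith
  have hv1 : 1 - 2 * errl K A g σ α ε1 ε2 l t / A l t ≤ 1 := by
    have h3 : 0 ≤ 2 * errl K A g σ α ε1 ε2 l t / A l t := by positivity
    linarith
  obtain ⟨ξs, hξs0, hξsv⟩ := exists_hatg_eq hgint hgnorm hv0 hv1
  have hginvv : ginv (1 - 2 * errl K A g σ α ε1 ε2 l t / A l t) = ξs := by
    rw [← hξsv, hginv ξs hξs0]
  have heqw : ‖hatg g (σ t * |ηhat l - deriv (φ l) t|)‖
      = ‖hatg g (σ t * (ηhat l - deriv (φ l) t))‖ := by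
    rcases le_total 0 (ηhat l - deriv (φ l) t) with hd | hd
    · rw [abs_of_nonneg hd]
    · rw [abs_of_nonpos hd]
      have he := hgeven (σ t * (ηhat l - deriv (φ l) t))
      rw [show -(σ t * (ηhat l - deriv (φ l) t))
        = σ t * -(ηhat l - deriv (φ l) t) by ring] at he
      exact he
  have hwle : σ t * |ηhat l - deriv (φ l) t| ≤ ξs := by
    by_contra hcon
    push_neg at hcon
    have hw0 : 0 ≤ σ t * |ηhat l - deriv (φ l) t| := mul_nonneg hσt.le (abs_nonneg _)
    have hle : ‖hatg g (σ t * |ηhat l - deriv (φ l) t|)‖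
        ≤ 1 - 2 * errl K A g σ α ε1 ε2 l t / A l t := by
      rw [← hξsv]; exact hgdec ξs _ hξs0 hcon.le
    have heq2 : ‖hatg g (σ t * |ηhat l - deriv (φ l) t|)‖
        = 1 - 2 * errl K A g σ α ε1 ε2 l t / A l t :=
      le_antisymm hle (by rw [heqw]; exact hgval)
    have h3 : ginv (1 - 2 * errl K A g σ α ε1 ε2 l t / A l t)
        = σ t * |ηhat l - deriv (φ l) t| := by
      rw [← heq2, hginv _ hw0]
    rw [hginvv] at h3
    linarith
  -- final assembly
  have hfin : aSTFT x g σ t (ηhat l) - xcomp A φ l t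
      = (aSTFT x g σ t (ηhat l) - xcomp A φ l t * hatg g (σ t * (ηhat l - deriv (φ l) t)))
        + xcomp A φ l t * (hatg g (σ t * (ηhat l - deriv (φ l) t)) - 1) := by ring
  rw [hfin]
  refine (norm_add_le _ _).trans ?_
  rw [norm_mul, hxnorm l hl, hginvv]
  have hgs := hatg_sub_one hgint hI1' hgnorm (σ t * (ηhat l - deriv (φ l) t))
  have habs : |σ t * (ηhat l - deriv (φ l) t)| = σ t * |ηhat l - deriv (φ l) t| := by
    rw [abs_mul, abs_of_pos hσt]
  rw [habs] at hgs
  have hbound : A l t * ‖hatg g (σ t * (ηhat l - deriv (φ l) t)) - 1‖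
      ≤ 2 * π * momentI g 1 * A l t * ξs := by
    calc A l t * ‖hatg g (σ t * (ηhat l - deriv (φ l) t)) - 1‖
        ≤ A l t * (2 * π * (σ t * |ηhat l - deriv (φ l) t|) * momentI g 1) :=
          mul_le_mul_of_nonneg_left hgs hAlpos.le
      _ ≤ 2 * π * momentI g 1 * A l t * ξs := by
          nlinarith [mul_nonneg (mul_nonneg hI1nn hAlpos.le) (sub_nonneg.mpr hwle), hπ,
            hI1nn, hAlpos.le, hwle]
  linarith [hBl]
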